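/- Min-capacity is additive under parallel composition with distinct inputs: C_∞(C₁ × C₂) = C_∞(C₁) + C_∞(C₂), where C_∞(C) = sup over priors π of I_∞(π, C). (In particular, C_∞(C) is attained at the uniform prior and equals log Σ_y max_x C[x,y].) -/

import Mathlib

open Finset

namespace QIF12

/-- Prior vulnerability. -/
noncomputable def Vmax {X : Type*} [Fintype X] [Nonempty X] (π : X → ℝ) : ℝ :=
  Finset.univ.sup' Finset.univ_nonempty π

/-- Posterior vulnerability. -/
noncomputable def Vpost {X Y : Type*} [Fintype X] [Fintype Y] [Nonempty X]
    (π : X → ℝ) (C : X → Y → ℝ) : ℝ :=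
  ∑ y, Finset.univ.sup' Finset.univ_nonempty fun x => π x * C x y

/-- Min-entropy leakage (in bits). -/
noncomputable def Iinf {X Y : Type*} [Fintype X] [Fintype Y] [Nonempty X]
    (π : X → ℝ) (C : X → Y → ℝ) : ℝ :=
  Real.logb 2 (Vpost π C / Vmax π)

/-- The type of probability distributions on `X`. -/
def Dist (X : Type*) [Fintype X] : Type _ :=
  { π : X → ℝ // (∀ x, 0 ≤ π x) ∧ ∑ x, π x = 1 }

/-- Min-capacity `C_∞(C) = sup_π I_∞(π, C)`. -/
noncomputable def minCap {X Y : Type*} [Fintype X] [Fintype Y] [Nonempty X]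
    (C : X → Y → ℝ) : ℝ :=
  ⨆ π : Dist X, Iinf π.1 C

noncomputable def parC {X₁ X₂ Y₁ Y₂ : Type*}
    (C₁ : X₁ → Y₁ → ℝ) (C₂ : X₂ → Y₂ → ℝ) : X₁ × X₂ → Y₁ × Y₂ → ℝ :=
  fun p q => C₁ p.1 q.1 * C₂ p.2 q.2

section Aux

variable {X Y : Type*} [Fintype X] [Fintype Y] [Nonempty X]

/-- abbreviation for the sum of column maxima -/
noncomputable def sumMax (C : X → Y → ℝ) : ℝ :=
  ∑ y, Finset.univ.sup' Finset.univ_nonempty fun x => C x y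

lemma sup'_const_mul (c : ℝ) (hc : 0 < c) (f : X → ℝ) :
    (Finset.univ.sup' Finset.univ_nonempty fun x => c * f x)
      = c * Finset.univ.sup' Finset.univ_nonempty f := by
  apply le_antisymm
  · apply Finset.sup'_le
    intro x _
    exact mul_le_mul_of_nonneg_left (Finset.le_sup' f (mem_univ x)) hc.le
  · obtain ⟨x, -, hx⟩ := Finset.exists_mem_eq_sup' Finset.univ_nonempty f
    rw [hx]
    exact Finset.le_sup' (fun x => c * f x) (mem_univ x)

lemma one_le_sumMax (C : X → Y → ℝ) (hC1 : ∀ x, ∑ y, C x y = 1) : 1 ≤ sumMax C := by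
  obtain ⟨x₀⟩ := ‹Nonempty X›
  calc (1:ℝ) = ∑ y, C x₀ y := (hC1 x₀).symm
    _ ≤ sumMax C := Finset.sum_le_sum fun y _ =>
        Finset.le_sup' (fun x => C x y) (mem_univ x₀)

lemma Vmax_pos (π : X → ℝ) (h0 : ∀ x, 0 ≤ π x) (h1 : ∑ x, π x = 1) : 0 < Vmax π := by
  obtain ⟨x, -, hx⟩ : ∃ x ∈ Finset.univ, (0:ℝ) < π x := by
    by_contra h
    push_neg at h
    have : ∑ x, π x ≤ 0 := Finset.sum_nonpos fun x hx => h x hx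
    linarith
  exact lt_of_lt_of_le hx (Finset.le_sup' π (mem_univ x))

lemma Vpost_ge_Vmax (π : X → ℝ) (h0 : ∀ x, 0 ≤ π x)
    (C : X → Y → ℝ) (hC0 : ∀ x y, 0 ≤ C x y) (hC1 : ∀ x, ∑ y, C x y = 1) :
    Vmax π ≤ Vpost π C := by
  obtain ⟨x, -, hx⟩ := Finset.exists_mem_eq_sup' (Finset.univ_nonempty (α := X)) π
  rw [Vmax, hx]
  calc π x = ∑ y, π x * C x y := by rw [← Finset.mul_sum, hC1, mul_one]
    _ ≤ Vpost π C := Finset.sum_le_sum fun y _ =>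
        Finset.le_sup' (fun x => π x * C x y) (mem_univ x)

lemma Iinf_le (π : X → ℝ) (h0 : ∀ x, 0 ≤ π x) (h1 : ∑ x, π x = 1)
    (C : X → Y → ℝ) (hC0 : ∀ x y, 0 ≤ C x y) (hC1 : ∀ x, ∑ y, C x y = 1) :
    Iinf π C ≤ Real.logb 2 (sumMax C) := by
  have hVm := Vmax_pos π h0 h1
  have hVp : Vmax π ≤ Vpost π C := Vpost_ge_Vmax π h0 C hC0 hC1
  have hratio : Vpost π C / Vmax π ≤ sumMax C := by
    rw [div_le_iff₀ hVm]
    calc Vpost π C ≤ ∑ y, Vmax π * Finset.univ.sup' Finset.univ_nonempty fun x => C x y := by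
          apply Finset.sum_le_sum
          intro y _
          apply Finset.sup'_le
          intro x _
          exact mul_le_mul (Finset.le_sup' π (mem_univ x))
            (Finset.le_sup' (fun x => C x y) (mem_univ x)) (hC0 x y) hVm.le
      _ = sumMax C * Vmax π := by rw [← Finset.mul_sum, sumMax, mul_comm]
  have hpos : 0 < Vpost π C / Vmax π := by
    apply div_pos (lt_of_lt_of_le hVm hVp) hVm
  exact Real.logb_le_logb_of_le (by norm_num) hpos hratio

/-- uniform prior -/
noncomputable def unif (X : Type*) [Fintype X] : X → ℝ := fun _ => (1:ℝ) / Fintype.card X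

lemma unif_mem : (∀ x, 0 ≤ unif X x) ∧ ∑ x : X, unif X x = 1 := by
  have hc : (0:ℝ) < Fintype.card X := by
    exact_mod_cast Fintype.card_pos
  constructor
  · intro x; exact div_nonneg zero_le_one hc.le
  · simp only [unif]; rw [Finset.sum_const, Finset.card_univ, nsmul_eq_mul]
    field_simp

lemma Iinf_unif (C : X → Y → ℝ) :
    Iinf (unif X) C = Real.logb 2 (sumMax C) := by
  have hc : (0:ℝ) < Fintype.card X := by exact_mod_cast Fintype.card_pos
  have hcinv : (0:ℝ) < 1 / Fintype.card X := by positivity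
  have hVm : Vmax (unif X) = 1 / Fintype.card X := by
    rw [Vmax]; exact Finset.sup'_const _ _
  have hVp : Vpost (unif X) C = (1 / Fintype.card X) * sumMax C := by
    rw [Vpost, sumMax, Finset.mul_sum]
    exact Finset.sum_congr rfl fun y _ => sup'_const_mul _ hcinv _
  rw [Iinf, hVm, hVp, mul_comm, mul_div_assoc, div_self hcinv.ne', mul_one]

instance : Nonempty (Dist X) := ⟨⟨unif X, unif_mem⟩⟩

lemma minCap_eq (C : X → Y → ℝ) (hC0 : ∀ x y, 0 ≤ C x y) (hC1 : ∀ x, ∑ y, C x y = 1) :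
    minCap C = Real.logb 2 (sumMax C) := by
  apply le_antisymm
  · apply ciSup_le
    intro π
    exact Iinf_le π.1 π.2.1 π.2.2 C hC0 hC1
  · have := le_ciSup (f := fun π : Dist X => Iinf π.1 C)
      ⟨Real.logb 2 (sumMax C), by
        rintro _ ⟨π, rfl⟩
        exact Iinf_le π.1 π.2.1 π.2.2 C hC0 hC1⟩ ⟨unif X, unif_mem⟩
    rw [Iinf_unif C] at this
    exact this

end Aux

/-- Min-capacity is additive under parallel composition with distinct inputs;
moreover it is attained at the uniform prior and equals `log ∑_y max_x C[x,y]`. -/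
theorem min_capacity_parallel_additive {X₁ X₂ Y₁ Y₂ : Type*}
    [Fintype X₁] [Fintype X₂] [Fintype Y₁] [Fintype Y₂]
    [Nonempty X₁] [Nonempty X₂]
    (C₁ : X₁ → Y₁ → ℝ) (C₂ : X₂ → Y₂ → ℝ)
    (hC₁0 : ∀ x y, 0 ≤ C₁ x y) (hC₁1 : ∀ x, ∑ y, C₁ x y = 1)
    (hC₂0 : ∀ x y, 0 ≤ C₂ x y) (hC₂1 : ∀ x, ∑ y, C₂ x y = 1) :
    minCap (parC C₁ C₂) = minCap C₁ + minCap C₂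
      ∧ minCap C₁ = Iinf (fun _ : X₁ => (1 : ℝ) / Fintype.card X₁) C₁
      ∧ minCap C₁
          = Real.logb 2
            (∑ y, Finset.univ.sup' Finset.univ_nonempty fun x => C₁ x y) := by
  have hP0 : ∀ (x : X₁ × X₂) (y : Y₁ × Y₂), 0 ≤ parC C₁ C₂ x y := fun x y =>
    mul_nonneg (hC₁0 _ _) (hC₂0 _ _)
  have hP1 : ∀ x : X₁ × X₂, ∑ y, parC C₁ C₂ x y = 1 := by
    intro x
    rw [Fintype.sum_prod_type]
    simp only [parC]
    rw [← Finset.sum_mul_sum]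
    rw [hC₁1, hC₂1, mul_one]
  have hsum : sumMax (parC C₁ C₂) = sumMax C₁ * sumMax C₂ := by
    rw [sumMax, Fintype.sum_prod_type]
    rw [sumMax, sumMax, Finset.sum_mul_sum]
    apply Finset.sum_congr rfl
    intro y₁ _
    apply Finset.sum_congr rfl
    intro y₂ _
    apply le_antisymm
    · apply Finset.sup'_le
      rintro ⟨x₁, x₂⟩ -
      exact mul_le_mul (Finset.le_sup' (fun x => C₁ x y₁) (mem_univ x₁))
        (Finset.le_sup' (fun x => C₂ x y₂) (mem_univ x₂)) (hC₂0 _ _)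
        (le_trans (hC₁0 (Classical.arbitrary X₁) y₁)
          (Finset.le_sup' (fun x => C₁ x y₁) (mem_univ _)))
    · obtain ⟨x₁, -, h₁⟩ := Finset.exists_mem_eq_sup' (Finset.univ_nonempty (α := X₁))
        (fun x => C₁ x y₁)
      obtain ⟨x₂, -, h₂⟩ := Finset.exists_mem_eq_sup' (Finset.univ_nonempty (α := X₂))
        (fun x => C₂ x y₂)
      rw [h₁, h₂]
      exact Finset.le_sup' (fun p : X₁ × X₂ => parC C₁ C₂ p (y₁, y₂)) (mem_univ (x₁, x₂))
  have h1 := minCap_eq C₁ hC₁0 hC₁1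
  have h2 := minCap_eq C₂ hC₂0 hC₂1
  have hP := minCap_eq (parC C₁ C₂) hP0 hP1
  have hs₁ : (0:ℝ) < sumMax C₁ := lt_of_lt_of_le one_pos (one_le_sumMax C₁ hC₁1)
  have hs₂ : (0:ℝ) < sumMax C₂ := lt_of_lt_of_le one_pos (one_le_sumMax C₂ hC₂1)
  refine ⟨?_, ?_, ?_⟩
  · rw [hP, h1, h2, hsum, Real.logb_mul hs₁.ne' hs₂.ne']
  · rw [h1, ← Iinf_unif C₁]; rfl
  · exact h1

end QIF12
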